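/- If T is a tree (a connected acyclic graph) and L is the set of pendant edges of T, then gp_e(T) = |L|, i.e., the edge general position number of T equals the number of its pendant edges. -/

import Mathlib

open SimpleGraph

/-- A walk is a geodesic if its length equals the distance between its endpoints. -/
def IsGeodesic {V : Type*} (G : SimpleGraph V) {u v : V} (p : G.Walk u v) : Prop :=
  p.length = G.dist u v

/-- A set `S` of edges of `G` is an edge general position set if no geodesic of `G`
contains three (distinct) edges of `S`. -/
def IsEdgeGPSet {V : Type*} (G : SimpleGraph V) (S : Set (Sym2 V)) : Prop :=
  S ⊆ G.edgeSet ∧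
  ∀ ⦃u v : V⦄ (p : G.Walk u v), IsGeodesic G p →
    ∀ e₁ ∈ S, ∀ e₂ ∈ S, ∀ e₃ ∈ S,
      e₁ ∈ p.edges → e₂ ∈ p.edges → e₃ ∈ p.edges →
        e₁ = e₂ ∨ e₁ = e₃ ∨ e₂ = e₃

/-- The set of pendant edges of `G`: edges having an endpoint of degree one. -/
def pendantEdges {V : Type*} [Fintype V] (G : SimpleGraph V) [DecidableRel G.Adj] :
    Set (Sym2 V) :=
  {e ∈ G.edgeSet | ∃ v ∈ e, G.degree v = 1}

namespace EgpTreeAux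

open SimpleGraph Walk

variable {V : Type*} {G : SimpleGraph V}

/-- The unique path between two vertices of a tree. -/
noncomputable def pth (hT : G.IsTree) (x y : V) : G.Walk x y :=
  (hT.existsUnique_path x y).choose

lemma pth_isPath (hT : G.IsTree) (x y : V) : (pth hT x y).IsPath :=
  (hT.existsUnique_path x y).choose_spec.1

lemma pth_unique (hT : G.IsTree) {x y : V} {p : G.Walk x y} (hp : p.IsPath) :
    p = pth hT x y :=
  (hT.existsUnique_path x y).choose_spec.2 p hp

lemma pth_nil (hT : G.IsTree) (x : V) : pth hT x x = Walk.nil :=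
  (pth_unique hT Walk.IsPath.nil).symm

lemma pth_adj (hT : G.IsTree) {x y : V} (h : G.Adj x y) :
    pth hT x y = Walk.cons h Walk.nil :=
  (pth_unique hT (by simp [Walk.cons_isPath_iff, h.ne])).symm

lemma pth_reverse (hT : G.IsTree) (x y : V) : (pth hT x y).reverse = pth hT y x :=
  pth_unique hT ((pth_isPath hT x y).reverse)

lemma mem_pth_symm (hT : G.IsTree) {x y a : V} (h : a ∈ (pth hT x y).support) :
    a ∈ (pth hT y x).support := by
  rw [← pth_reverse, Walk.support_reverse, List.mem_reverse]; exact h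

lemma pth_takeUntil [DecidableEq V] (hT : G.IsTree) {x y w : V}
    (h : w ∈ (pth hT x y).support) : (pth hT x y).takeUntil w h = pth hT x w :=
  pth_unique hT ((pth_isPath hT x y).takeUntil h)

lemma pth_dropUntil [DecidableEq V] (hT : G.IsTree) {x y w : V}
    (h : w ∈ (pth hT x y).support) : (pth hT x y).dropUntil w h = pth hT w y :=
  pth_unique hT ((pth_isPath hT x y).dropUntil h)

/-- If `w` is on a path ending at `y`, `w ≠ y`, then `y` cannot occur in the part before `w`. -/
lemma nod [DecidableEq V] {x y w : V} {p : G.Walk x y} (hp : p.IsPath)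
    (hw : w ∈ p.support) (hne : w ≠ y) (hy : y ∈ (p.takeUntil w hw).support) : False := by
  have hd : ¬ (p.dropUntil w hw).Nil := by
    intro hn
    exact hne (Walk.eq_of_length_eq_zero (Walk.nil_iff_length_eq.mp hn))
  obtain ⟨z, ha, q, hq⟩ := Walk.not_nil_iff.mp hd
  have hy2 : y ∈ q.support := q.end_mem_support
  have hnd := hp.support_nodup
  rw [← p.take_spec hw, Walk.support_append] at hnd
  have hdis := (List.nodup_append'.mp hnd).2.2
  exact hdis hy (by rw [hq, Walk.support_cons]; exact hy2)

/-- `side hT a b x` means: `x` is on the `a`-side of the edge `ab`,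
i.e. the path from `x` to `b` passes through `a`. -/
def side (hT : G.IsTree) (a b x : V) : Prop := a ∈ (pth hT x b).support

lemma side_self (hT : G.IsTree) {a b : V} (hab : a ≠ b) : side hT a b a := by
  unfold side; exact Walk.start_mem_support _

lemma not_side_self (hT : G.IsTree) {a b : V} (hab : a ≠ b) : ¬ side hT a b b := by
  unfold side
  rw [pth_nil]
  simpa using hab

lemma side_not_side (hT : G.IsTree) {u v x : V} (hne : u ≠ v)
    (h1 : side hT u v x) : ¬ side hT v u x := by
  classical
  intro h2
  exact nod (pth_isPath hT x u) h2 hne.symm (by rw [pth_takeUntil hT h2]; exact h1)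

/-- Helper for forming paths by appending. -/
lemma isPath_append {x y z : V} {p : G.Walk x y} {q : G.Walk y z} (hp : p.IsPath)
    (hq : q.IsPath) (h : ∀ a, a ∈ p.support → a ∈ q.support → a = y) :
    (p.append q).IsPath := by
  rw [Walk.isPath_def, Walk.support_append]
  have hy : y ∉ q.support.tail := by
    have := hq.support_nodup
    rw [q.support_eq_cons] at this
    exact (List.nodup_cons.mp this).1
  refine List.Nodup.append hp.support_nodup ?_ ?_
  · have := hq.support_nodup
    rw [q.support_eq_cons] at this
    exact (List.nodup_cons.mp this).2
  · intro a ha hat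
    have := h a ha (List.mem_of_mem_tail hat)
    subst this
    exact hy hat

lemma side_or (hT : G.IsTree) {u v : V} (huv : G.Adj u v) (x : V) :
    side hT u v x ∨ side hT v u x := by
  by_cases h : v ∈ (pth hT x u).support
  · right; exact h
  · left
    have hpath : ((pth hT x u).append (Walk.cons huv Walk.nil)).IsPath := by
      refine isPath_append (pth_isPath hT x u) (by simp [Walk.cons_isPath_iff, huv.ne]) ?_
      intro a ha hb
      simp only [Walk.support_cons, Walk.support_nil, List.mem_cons, List.mem_singleton,
        List.not_mem_nil, or_false] at hb
      rcases hb with rfl | rfl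
      · rfl
      · exact absurd ha h
    have := pth_unique hT hpath
    unfold side
    rw [← this, Walk.mem_support_append_iff]
    left; exact Walk.end_mem_support _

lemma side_trans (hT : G.IsTree) {u v x t : V} (huv : G.Adj u v)
    (hx : side hT u v x) (ht : t ∈ (pth hT x u).support) : side hT u v t := by
  classical
  rcases side_or hT huv t with h | h
  · exact h
  · exfalso
    have hd : pth hT t u = (pth hT x u).dropUntil t ht := (pth_dropUntil hT ht).symm
    have hv : v ∉ (pth hT x u).support := side_not_side hT huv.ne hx
    exact hv (Walk.support_dropUntil_subset _ ht (hd ▸ h))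

lemma edge_mem_pth (hT : G.IsTree) {a b u : V} (hab : G.Adj a b)
    (hb : b ∈ (pth hT a u).support) : s(a, b) ∈ (pth hT a u).edges := by
  classical
  apply Walk.edges_takeUntil_subset (pth hT a u) hb
  rw [pth_takeUntil hT hb, pth_adj hT hab]
  simp

lemma exists_far (hT : G.IsTree) {a b : V} (hab : G.Adj a b) (u : V) :
    ∃ c, c ∈ s(a, b) ∧ s(a, b) ∈ (pth hT c u).edges := by
  rcases side_or hT hab u with h | h
  · refine ⟨b, Sym2.mem_mk_right a b, ?_⟩
    have ha : a ∈ (pth hT b u).support := mem_pth_symm hT h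
    have := edge_mem_pth hT hab.symm ha
    simpa [Sym2.eq_swap] using this
  · exact ⟨a, Sym2.mem_mk_left a b, edge_mem_pth hT hab (mem_pth_symm hT h)⟩

lemma pth_decomp (hT : G.IsTree) {u v x : V} (huv : G.Adj u v) (hx : side hT v u x) :
    pth hT x u = (pth hT x v).append (Walk.cons huv.symm Walk.nil) := by
  classical
  have h1 := (pth hT x u).take_spec hx
  rw [pth_takeUntil hT hx, pth_dropUntil hT hx] at h1
  rw [← h1, pth_adj hT huv.symm]

lemma pth_cross (hT : G.IsTree) {u v x z : V} (huv : G.Adj u v)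
    (hx : side hT v u x) (hz : side hT u v z) :
    pth hT x z = (pth hT x v).append (Walk.cons huv.symm (pth hT u z)) := by
  have hvns : v ∉ (pth hT u z).support := by
    intro hmem
    have := side_trans hT huv hz (mem_pth_symm hT hmem)
    exact not_side_self hT huv.ne this
  have hcons : (Walk.cons huv.symm (pth hT u z)).IsPath := by
    rw [Walk.cons_isPath_iff]
    exact ⟨pth_isPath hT u z, hvns⟩
  refine (pth_unique hT (isPath_append (pth_isPath hT x v) hcons ?_)).symm
  intro a ha hb
  rw [Walk.support_cons, List.mem_cons] at hb
  rcases hb with rfl | hb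
  · rfl
  · exfalso
    have h1 : side hT u v a := side_trans hT huv hz (mem_pth_symm hT hb)
    have h2 : side hT v u a := side_trans hT huv.symm hx ha
    exact side_not_side hT huv.ne h1 h2

lemma edge_unique_at_start : ∀ {x u : V} (p : G.Walk u x), p.IsPath →
    ∀ e1 ∈ p.edges, ∀ e2 ∈ p.edges, u ∈ e1 → u ∈ e2 → e1 = e2 := by
  intro x u p hp e1 h1 e2 h2 hu1 hu2
  cases p with
  | nil => simp at h1
  | @cons _ w _ h q =>
    have key : ∀ e ∈ q.edges, u ∈ e → False := by
      intro e he hue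
      obtain ⟨c, rfl⟩ := Sym2.mem_iff_exists.mp hue
      exact ((Walk.cons_isPath_iff _ _).mp hp).2 (q.fst_mem_support_of_mem_edges he)
    rw [Walk.edges_cons, List.mem_cons] at h1 h2
    rcases h1 with rfl | h1
    · rcases h2 with rfl | h2
      · rfl
      · exact absurd (key _ h2 hu2) (by simp)
    · exact absurd (key _ h1 hu1) (by simp)

lemma edge_unique_at_end {x u : V} {p : G.Walk x u} (hp : p.IsPath) {e1 e2 : Sym2 V}
    (h1 : e1 ∈ p.edges) (h2 : e2 ∈ p.edges) (hu1 : u ∈ e1) (hu2 : u ∈ e2) : e1 = e2 := by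
  refine edge_unique_at_start p.reverse hp.reverse e1 ?_ e2 ?_ hu1 hu2 <;>
    simpa [Walk.edges_reverse]

lemma isGeodesic_of_isPath (hT : G.IsTree) {x y : V} {p : G.Walk x y} (hp : p.IsPath) :
    IsGeodesic G p := by
  obtain ⟨q, hq, hl⟩ := hT.isConnected.exists_path_of_dist x y
  have : p = q := (pth_unique hT hp).trans (pth_unique hT hq).symm
  rw [IsGeodesic, this, hl]

/-- Key lemma: for an edge `uv` of an edge general position set `S`, it is impossible that
`S` contains an edge strictly on the `u`-side and an edge strictly on the `v`-side. -/
lemma no_both_sides (hT : G.IsTree) {S : Set (Sym2 V)} (hS : IsEdgeGPSet G S)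
    {u v : V} (huv : G.Adj u v) (he : s(u, v) ∈ S) {f g : Sym2 V}
    (hf : f ∈ S) (hg : g ∈ S)
    (hfu : ∀ z ∈ f, side hT u v z) (hgv : ∀ z ∈ g, side hT v u z) : False := by
  induction f using Sym2.ind with | _ a b => ?_
  induction g using Sym2.ind with | _ c d => ?_
  have hab : G.Adj a b := (G.mem_edgeSet).mp (hS.1 hf)
  have hcd : G.Adj c d := (G.mem_edgeSet).mp (hS.1 hg)
  obtain ⟨a', ha'm, ha'e⟩ := exists_far hT hab u
  obtain ⟨c', hc'm, hc'e⟩ := exists_far hT hcd v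
  have ha's : side hT u v a' := hfu a' ha'm
  have hc's : side hT v u c' := hgv c' hc'm
  have hunotin : u ∉ (pth hT v c').support := by
    intro hmem
    have := side_trans hT huv.symm hc's (mem_pth_symm hT hmem)
    exact not_side_self hT huv.ne.symm this
  have hcons : (Walk.cons huv (pth hT v c')).IsPath := by
    rw [Walk.cons_isPath_iff]; exact ⟨pth_isPath hT v c', hunotin⟩
  have hW : ((pth hT a' u).append (Walk.cons huv (pth hT v c'))).IsPath := by
    refine isPath_append (pth_isPath hT a' u) hcons ?_
    intro t ht htc
    rw [Walk.support_cons, List.mem_cons] at htc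
    rcases htc with rfl | htc
    · rfl
    · exfalso
      have h1 : side hT u v t := side_trans hT huv ha's ht
      have h2 : side hT v u t := side_trans hT huv.symm hc's (mem_pth_symm hT htc)
      exact side_not_side hT huv.ne h1 h2
  have hgeo := isGeodesic_of_isPath hT hW
  have hmf : s(a, b) ∈ ((pth hT a' u).append (Walk.cons huv (pth hT v c'))).edges := by
    rw [Walk.edges_append, List.mem_append]; left; exact ha'e
  have hme : s(u, v) ∈ ((pth hT a' u).append (Walk.cons huv (pth hT v c'))).edges := by
    rw [Walk.edges_append, List.mem_append]; right
    rw [Walk.edges_cons]; exact List.mem_cons_self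
  have hmg : s(c, d) ∈ ((pth hT a' u).append (Walk.cons huv (pth hT v c'))).edges := by
    rw [Walk.edges_append, List.mem_append]; right
    rw [Walk.edges_cons]
    refine List.mem_cons_of_mem _ ?_
    have : pth hT v c' = (pth hT c' v).reverse := (pth_reverse hT c' v).symm
    rw [this, Walk.edges_reverse, List.mem_reverse]; exact hc'e
  have hfe : s(a, b) ≠ s(u, v) := by
    intro hfeq
    have : v ∈ s(a, b) := by rw [hfeq]; exact Sym2.mem_mk_right u v
    exact not_side_self hT huv.ne (hfu v this)
  have hge : s(c, d) ≠ s(u, v) := by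
    intro hgeq
    have : u ∈ s(c, d) := by rw [hgeq]; exact Sym2.mem_mk_left u v
    exact not_side_self hT huv.ne.symm (hgv u this)
  have hfg : s(a, b) ≠ s(c, d) := by
    intro hfgeq
    have : a ∈ s(c, d) := by rw [← hfgeq]; exact Sym2.mem_mk_left a b
    exact side_not_side hT huv.ne (hfu a (Sym2.mem_mk_left a b)) (hgv a this)
  rcases hS.2 _ hgeo _ hf _ he _ hg hmf hme hmg with h | h | h
  · exact hfe h
  · exact hfg h
  · exact hge h.symm

/-- Vertices joined by an edge distinct from `uv` lie on the same side of `uv`. -/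
lemma side_adj (hT : G.IsTree) {u v p q : V} (huv : G.Adj u v) (hpq : G.Adj p q)
    (hne : s(p, q) ≠ s(u, v)) (hp : side hT u v p) : side hT u v q := by
  rcases side_or hT huv q with h | hq
  · exact h
  exfalso
  by_cases hpmem : p ∈ (pth hT q u).support
  · have hdec := pth_decomp hT huv hq
    rw [hdec, Walk.mem_support_append_iff] at hpmem
    rcases hpmem with hmem | hmem
    · exact side_not_side hT huv.ne hp (side_trans hT huv.symm hq hmem)
    · rw [Walk.support_cons, Walk.support_nil] at hmem
      simp only [List.mem_cons, List.mem_singleton, List.not_mem_nil, or_false] at hmem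
      rcases hmem with hpv | hpu
      · -- p = v
        subst hpv
        exact not_side_self hT huv.ne hp
      · -- p = u : then q ≠ v, but pth q u is a single edge and also has length ≥ 2
        subst hpu
        have hqv : q ≠ v := fun h => hne (by rw [h])
        have h1 : pth hT q p = Walk.cons hpq.symm Walk.nil := pth_adj hT hpq.symm
        have h2 := congrArg Walk.length (h1.symm.trans hdec)
        rw [Walk.length_cons, Walk.length_nil, Walk.length_append, Walk.length_cons,
          Walk.length_nil] at h2
        have : (pth hT q v).length = 0 := by omega
        exact hqv (Walk.eq_of_length_eq_zero this)
  · have hpath : (Walk.cons hpq (pth hT q u)).IsPath := by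
      rw [Walk.cons_isPath_iff]; exact ⟨pth_isPath hT q u, hpmem⟩
    have := pth_unique hT hpath
    have hvmem : v ∈ (pth hT p u).support := by
      rw [← this, Walk.support_cons, List.mem_cons]
      right; exact hq
    exact side_not_side hT huv.ne hp hvmem

lemma edge_same_side (hT : G.IsTree) {u v : V} (huv : G.Adj u v) {e' : Sym2 V}
    (he' : e' ∈ G.edgeSet) (hne : e' ≠ s(u, v)) :
    (∀ z ∈ e', side hT u v z) ∨ (∀ z ∈ e', side hT v u z) := by
  induction e' using Sym2.ind with | _ p q => ?_
  have hpq : G.Adj p q := (G.mem_edgeSet).mp he'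
  rcases side_or hT huv p with hp | hp
  · left
    intro z hz
    rcases Sym2.mem_iff.mp hz with rfl | rfl
    · exact hp
    · exact side_adj hT huv hpq hne hp
  · right
    intro z hz
    have hne' : s(p, q) ≠ s(v, u) := fun h => hne (h.trans Sym2.eq_swap)
    rcases Sym2.mem_iff.mp hz with rfl | rfl
    · exact hp
    · exact side_adj hT huv.symm hpq hne' hp

/-- On the `v`-side of an edge `uv` with `deg v ≥ 2` there is a pendant edge. -/
lemma exists_pendant_side [Fintype V] [DecidableRel G.Adj] (hT : G.IsTree) {u v : V}
    (huv : G.Adj u v) (hv : 2 ≤ G.degree v) :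
    ∃ x y, G.Adj x y ∧ G.degree x = 1 ∧ side hT v u x ∧ side hT v u y := by
  classical
  obtain ⟨w, hw, hwu⟩ := Finset.exists_mem_ne
    (by rw [G.card_neighborFinset_eq_degree]; omega : 1 < (G.neighborFinset v).card) u
  have hvw : G.Adj v w := (G.mem_neighborFinset v w).mp hw
  have hwside : side hT v u w := by
    rcases side_or hT huv w with h | h
    · exfalso
      have : u ∈ (pth hT w v).support := h
      rw [pth_adj hT hvw.symm] at this
      simp only [Walk.support_cons, Walk.support_nil, List.mem_cons, List.mem_singleton,
        List.not_mem_nil, or_false] at this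
      rcases this with rfl | rfl
      · exact hwu rfl
      · exact huv.ne rfl
    · exact h
  set s : Finset V := Finset.univ.filter (fun x => side hT v u x) with hs
  have hws : w ∈ s := by simp [hs, hwside]
  obtain ⟨x, hxs, hmax⟩ := Finset.exists_max_image s (fun x => (pth hT x v).length) ⟨w, hws⟩
  have hxside : side hT v u x := by simpa [hs] using hxs
  have hwlen : (pth hT w v).length = 1 := by rw [pth_adj hT hvw.symm]; simp
  have hxv : x ≠ v := by
    intro h
    have := hmax w hws
    rw [h, pth_nil, hwlen] at this
    simp at this
  have hnotnil : ¬ (pth hT x v).Nil := fun hn =>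
    hxv (Walk.eq_of_length_eq_zero (Walk.nil_iff_length_eq.mp hn))
  obtain ⟨y, hxy, q, hq⟩ := Walk.not_nil_iff.mp hnotnil
  have hyq : y ∈ (pth hT x v).support := by
    rw [hq, Walk.support_cons]
    exact List.mem_cons_of_mem _ q.start_mem_support
  have hyside : side hT v u y := side_trans hT huv.symm hxside hyq
  have hq' : q = pth hT y v :=
    pth_unique hT ((Walk.cons_isPath_iff hxy q).mp (hq ▸ pth_isPath hT x v)).1
  have hxnq : x ∉ q.support := ((Walk.cons_isPath_iff hxy q).mp (hq ▸ pth_isPath hT x v)).2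
  subst hq'
  have hunotin : u ∉ (pth hT x v).support := by
    intro hmem
    have := side_trans hT huv.symm hxside hmem
    exact not_side_self hT huv.ne.symm this
  -- every neighbor of x equals y
  have hnbr : ∀ z, G.Adj x z → z = y := by
    intro z hz
    by_contra hzy
    have hznotin : z ∉ (pth hT x v).support := by
      intro hin
      have hzx : z ≠ x := hz.ne'
      have hzq : z ∈ (pth hT y v).support := by
        rw [hq, Walk.support_cons] at hin
        rcases List.mem_cons.mp hin with h | h
        · exact absurd h hzx
        · exact h
      have hdrop : pth hT z v = (pth hT y v).dropUntil z hzq := (pth_dropUntil hT hzq).symm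
      have hxnot : x ∉ (pth hT z v).support := by
        rw [hdrop]
        intro hc
        exact hxnq (Walk.support_dropUntil_subset _ _ hc)
      have hpath : (Walk.cons hz (pth hT z v)).IsPath := by
        rw [Walk.cons_isPath_iff]; exact ⟨pth_isPath hT z v, hxnot⟩
      have heq : Walk.cons hz (pth hT z v) = pth hT x v := pth_unique hT hpath
      have := congrArg Walk.support (heq.trans hq)
      rw [Walk.support_cons, Walk.support_cons, (pth hT z v).support_eq_cons,
        (pth hT y v).support_eq_cons] at this
      have := (List.cons.injEq _ _ _ _).mp this
      have := (List.cons.injEq _ _ _ _).mp this.2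
      exact hzy this.1
    have hpath : (Walk.cons hz.symm (pth hT x v)).IsPath := by
      rw [Walk.cons_isPath_iff]; exact ⟨pth_isPath hT x v, hznotin⟩
    have heq : Walk.cons hz.symm (pth hT x v) = pth hT z v := pth_unique hT hpath
    have hlen : (pth hT z v).length = (pth hT x v).length + 1 := by
      rw [← heq, Walk.length_cons]
    rcases side_or hT huv z with hzs | hzs
    · -- z is on the u-side; then z = u, and pth u v would be too long
      have hzu : z = u := by
        have : u ∈ (pth hT z v).support := hzs
        rw [← heq, Walk.support_cons] at this
        rcases List.mem_cons.mp this with h | h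
        · exact h.symm
        · exact absurd h hunotin
      have hzadj : G.Adj z v := by rw [hzu]; exact huv
      have hlen2 : (pth hT z v).length = 1 := by rw [pth_adj hT hzadj]; simp
      rw [hlen2] at hlen
      exact hxv (Walk.eq_of_length_eq_zero (p := pth hT x v) (by omega))
    · -- z is on the v-side, contradicting maximality
      have hzin : z ∈ s := by simp [hs, hzs]
      have := hmax z hzin
      omega
  refine ⟨x, y, hxy, ?_, hxside, hyside⟩
  have : G.neighborFinset x = {y} := by
    ext z
    simp only [mem_neighborFinset, Finset.mem_singleton]
    exact ⟨hnbr z, fun h => h ▸ hxy⟩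
  rw [← card_neighborFinset_eq_degree, this, Finset.card_singleton]

lemma inj_clash (hT : G.IsTree) {u v u' v' x : V} (huv : G.Adj u v) (hu'v' : G.Adj u' v')
    (hne : s(u, v) ≠ s(u', v')) (hx : side hT v u x) (hx' : side hT v' u' x)
    (h1 : side hT u v u') (h2 : side hT u' v' u) : False := by
  classical
  by_cases huu : u = u'
  · subst huu
    have hd1 := pth_decomp hT huv hx
    have hd2 := pth_decomp hT hu'v' hx'
    have he1 : s(u, v) ∈ (pth hT x u).edges := by
      rw [hd1, Walk.edges_append, List.mem_append]
      right; simp [Sym2.eq_swap]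
    have he2 : s(u, v') ∈ (pth hT x u).edges := by
      rw [hd2, Walk.edges_append, List.mem_append]
      right; simp [Sym2.eq_swap]
    exact hne (edge_unique_at_end (pth_isPath hT x u) he1 he2
      (Sym2.mem_mk_left u v) (Sym2.mem_mk_left u v'))
  · have hcross1 := pth_cross hT huv hx h1
    have hcross2 := pth_cross hT hu'v' hx' h2
    have hu_mem : u ∈ (pth hT x u').support := by
      rw [hcross1, Walk.mem_support_append_iff]
      right; rw [Walk.support_cons]
      exact List.mem_cons_of_mem _ (Walk.start_mem_support _)
    have hu'_mem : u' ∈ (pth hT x u).support := by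
      rw [hcross2, Walk.mem_support_append_iff]
      right; rw [Walk.support_cons]
      exact List.mem_cons_of_mem _ (Walk.start_mem_support _)
    exact nod (pth_isPath hT x u') hu_mem huu
      (by rw [pth_takeUntil hT hu_mem]; exact hu'_mem)

lemma exists_good [Fintype V] [DecidableRel G.Adj] (hT : G.IsTree) {S : Set (Sym2 V)}
    (hS : IsEdgeGPSet G S) {e : Sym2 V} (he : e ∈ S) (hnp : e ∉ pendantEdges G) :
    ∃ f u v, G.Adj u v ∧ f ∈ pendantEdges G ∧ f ∉ S ∧ e = s(u, v) ∧
      (∀ z ∈ f, side hT v u z) ∧ (∀ e' ∈ S, e' ≠ e → ∀ z ∈ e', side hT u v z) := by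
  classical
  induction e using Sym2.ind with | _ u₀ v₀ => ?_
  have huv : G.Adj u₀ v₀ := (G.mem_edgeSet).mp (hS.1 he)
  have hdeg : ∀ z ∈ s(u₀, v₀), G.degree z ≠ 1 := by
    intro z hz hdz
    exact hnp ⟨hS.1 he, z, hz, hdz⟩
  have hdu : 2 ≤ G.degree u₀ := by
    have h1 : 0 < G.degree u₀ := G.degree_pos_iff_exists_adj u₀ |>.mpr ⟨v₀, huv⟩
    have := hdeg u₀ (Sym2.mem_mk_left _ _)
    omega
  have hdv : 2 ≤ G.degree v₀ := by
    have h1 : 0 < G.degree v₀ := G.degree_pos_iff_exists_adj v₀ |>.mpr ⟨u₀, huv.symm⟩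
    have := hdeg v₀ (Sym2.mem_mk_right _ _)
    omega
  have hside : ∀ e' ∈ S, e' ≠ s(u₀, v₀) →
      (∀ z ∈ e', side hT u₀ v₀ z) ∨ (∀ z ∈ e', side hT v₀ u₀ z) := by
    intro e' he' hne
    exact edge_same_side hT huv (hS.1 he') hne
  by_cases hB : ∃ g ∈ S, g ≠ s(u₀, v₀) ∧ ∀ z ∈ g, side hT v₀ u₀ z
  · -- all other edges of S are on the v₀-side; find a pendant edge on the u₀-side
    obtain ⟨g, hgS, hgne, hgside⟩ := hB
    have hallv : ∀ e' ∈ S, e' ≠ s(u₀, v₀) → ∀ z ∈ e', side hT v₀ u₀ z := by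
      intro e' he' hne
      rcases hside e' he' hne with h | h
      · exact absurd (no_both_sides hT hS huv he he' hgS h hgside) not_false
      · exact h
    obtain ⟨x, y, hxy, hdx, hxs, hys⟩ := exists_pendant_side hT huv.symm hdu
    have hfp : s(x, y) ∈ pendantEdges G := ⟨(G.mem_edgeSet).mpr hxy, x, Sym2.mem_mk_left _ _, hdx⟩
    have hfmem : ∀ z ∈ s(x, y), side hT u₀ v₀ z := by
      intro z hz
      rcases Sym2.mem_iff.mp hz with rfl | rfl
      · exact hxs
      · exact hys
    have hfnS : s(x, y) ∉ S := by
      intro hfS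
      have hfne : s(x, y) ≠ s(u₀, v₀) := by
        intro h
        have : v₀ ∈ s(x, y) := by rw [h]; exact Sym2.mem_mk_right _ _
        exact not_side_self hT huv.ne (hfmem v₀ this)
      have := hallv _ hfS hfne x (Sym2.mem_mk_left _ _)
      exact side_not_side hT huv.ne (hfmem x (Sym2.mem_mk_left _ _)) this
    exact ⟨s(x, y), v₀, u₀, huv.symm, hfp, hfnS, Sym2.eq_swap, hfmem,
      hallv⟩
  · -- no other edge of S is on the v₀-side; find a pendant edge on the v₀-side
    have hallu : ∀ e' ∈ S, e' ≠ s(u₀, v₀) → ∀ z ∈ e', side hT u₀ v₀ z := by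
      intro e' he' hne
      rcases hside e' he' hne with h | h
      · exact h
      · exact (hB ⟨e', he', hne, h⟩).elim
    obtain ⟨x, y, hxy, hdx, hxs, hys⟩ := exists_pendant_side hT huv hdv
    have hfp : s(x, y) ∈ pendantEdges G := ⟨(G.mem_edgeSet).mpr hxy, x, Sym2.mem_mk_left _ _, hdx⟩
    have hfmem : ∀ z ∈ s(x, y), side hT v₀ u₀ z := by
      intro z hz
      rcases Sym2.mem_iff.mp hz with rfl | rfl
      · exact hxs
      · exact hys
    have hfnS : s(x, y) ∉ S := by
      intro hfS
      have hfne : s(x, y) ≠ s(u₀, v₀) := by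
        intro h
        have : u₀ ∈ s(x, y) := by rw [h]; exact Sym2.mem_mk_left _ _
        exact not_side_self hT huv.ne.symm (hfmem u₀ this)
      exact hB ⟨_, hfS, hfne, hfmem⟩
    exact ⟨s(x, y), u₀, v₀, huv, hfp, hfnS, rfl, hfmem, hallu⟩

lemma two_neighbors_of_internal {x y w : V} {p : G.Walk x y} (hp : p.IsPath)
    (hw : w ∈ p.support) (hx : w ≠ x) (hy : w ≠ y) :
    ∃ a b, a ≠ b ∧ G.Adj w a ∧ G.Adj w b := by
  classical
  set t := p.takeUntil w hw with ht
  set d := p.dropUntil w hw with hd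
  have htn : ¬ t.reverse.Nil := by
    rw [Walk.nil_iff_length_eq, Walk.length_reverse]
    intro h
    exact hx (Walk.eq_of_length_eq_zero (p := t) h).symm
  obtain ⟨a, ha, q, hq⟩ := Walk.not_nil_iff.mp htn
  have hdn : ¬ d.Nil := by
    rw [Walk.nil_iff_length_eq]
    intro h
    exact hy (Walk.eq_of_length_eq_zero (p := d) h)
  obtain ⟨b, hb, r, hr⟩ := Walk.not_nil_iff.mp hdn
  refine ⟨a, b, ?_, ha, hb⟩
  have hat : a ∈ t.support := by
    have : a ∈ t.reverse.support := by
      rw [hq, Walk.support_cons]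
      exact List.mem_cons_of_mem _ q.start_mem_support
    rwa [Walk.support_reverse, List.mem_reverse] at this
  have hbd : b ∈ d.support.tail := by
    rw [hr, Walk.support_cons]
    exact r.start_mem_support
  intro hab
  subst hab
  have hnd := hp.support_nodup
  rw [← p.take_spec hw, Walk.support_append] at hnd
  exact (List.nodup_append'.mp hnd).2.2 hat hbd

lemma pendant_gp [Fintype V] [DecidableRel G.Adj] (hT : G.IsTree) :
    IsEdgeGPSet G (pendantEdges G) := by
  constructor
  · exact Set.sep_subset _ _
  · intro u v p hgeo e1 he1 e2 he2 e3 he3 hp1 hp2 hp3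
    by_contra hcon
    push_neg at hcon
    obtain ⟨h12, h13, h23⟩ := hcon
    have hp : p.IsPath := p.isPath_of_length_eq_dist hgeo
    obtain ⟨-, w1, hw1e, hd1⟩ := he1
    obtain ⟨-, w2, hw2e, hd2⟩ := he2
    obtain ⟨-, w3, hw3e, hd3⟩ := he3
    have hsup : ∀ (e : Sym2 V) (w : V), e ∈ p.edges → w ∈ e → w ∈ p.support := by
      intro e w he hw
      obtain ⟨c, rfl⟩ := Sym2.mem_iff_exists.mp hw
      exact p.fst_mem_support_of_mem_edges he
    have hdistinct : ∀ (e f : Sym2 V) (w : V), e ∈ p.edges → f ∈ p.edges → e ≠ f →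
        w ∈ e → w ∈ f → G.degree w ≠ 1 := by
      intro e f w he hf hef hwe hwf
      obtain ⟨c, rfl⟩ := Sym2.mem_iff_exists.mp hwe
      obtain ⟨d, hfd⟩ := Sym2.mem_iff_exists.mp hwf
      subst hfd
      have hcd : c ≠ d := fun h => hef (by rw [h])
      have hac : G.Adj w c := p.adj_of_mem_edges he
      have had : G.Adj w d := p.adj_of_mem_edges hf
      intro hdeg
      have : 1 < G.degree w := by
        rw [← card_neighborFinset_eq_degree]
        exact Finset.one_lt_card.mpr
          ⟨c, (G.mem_neighborFinset w c).mpr hac, d, (G.mem_neighborFinset w d).mpr had, hcd⟩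
      omega
    have hends : ∀ (e : Sym2 V) (w : V), e ∈ p.edges → w ∈ e → G.degree w = 1 →
        w = u ∨ w = v := by
      intro e w he hw hdeg
      by_contra hc
      push_neg at hc
      obtain ⟨a, b, hab, ha, hb⟩ := two_neighbors_of_internal hp (hsup e w he hw) hc.1 hc.2
      have : 1 < G.degree w := by
        rw [← card_neighborFinset_eq_degree]
        exact Finset.one_lt_card.mpr
          ⟨a, (G.mem_neighborFinset w a).mpr ha, b, (G.mem_neighborFinset w b).mpr hb, hab⟩
      omega
    have a1 : w1 ≠ w2 := by
      intro h
      exact hdistinct e1 e2 w1 hp1 hp2 h12 hw1e (by rw [h]; exact hw2e) hd1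
    have a2 : w1 ≠ w3 := by
      intro h
      exact hdistinct e1 e3 w1 hp1 hp3 h13 hw1e (by rw [h]; exact hw3e) hd1
    have a3 : w2 ≠ w3 := by
      intro h
      exact hdistinct e2 e3 w2 hp2 hp3 h23 hw2e (by rw [h]; exact hw3e) hd2
    have h1' := hends e1 w1 hp1 hw1e hd1
    have h2' := hends e2 w2 hp2 hw2e hd2
    have h3' := hends e3 w3 hp3 hw3e hd3
    rcases h1' with h1' | h1' <;> rcases h2' with h2' | h2' <;> rcases h3' with h3' | h3' <;>
      first
        | exact a1 (h1'.trans h2'.symm)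
        | exact a2 (h1'.trans h3'.symm)
        | exact a3 (h2'.trans h3'.symm)

open Classical in
noncomputable def pick [Fintype V] [DecidableRel G.Adj] (hT : G.IsTree) {S : Set (Sym2 V)}
    (hS : IsEdgeGPSet G S) (e : Sym2 V) : Sym2 V :=
  if h : e ∈ S ∧ e ∉ pendantEdges G then (exists_good hT hS h.1 h.2).choose else e

lemma pick_spec [Fintype V] [DecidableRel G.Adj] (hT : G.IsTree) {S : Set (Sym2 V)}
    (hS : IsEdgeGPSet G S) {e : Sym2 V} (h : e ∈ S ∧ e ∉ pendantEdges G) :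
    ∃ u v, G.Adj u v ∧ pick hT hS e ∈ pendantEdges G ∧ pick hT hS e ∉ S ∧ e = s(u, v) ∧
      (∀ z ∈ pick hT hS e, side hT v u z) ∧
      (∀ e' ∈ S, e' ≠ e → ∀ z ∈ e', side hT u v z) := by
  rw [pick]
  rw [dif_pos h]
  exact (exists_good hT hS h.1 h.2).choose_spec

lemma pick_id [Fintype V] [DecidableRel G.Adj] (hT : G.IsTree) {S : Set (Sym2 V)}
    (hS : IsEdgeGPSet G S) {e : Sym2 V} (h : e ∈ pendantEdges G) : pick hT hS e = e := by
  rw [pick]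
  exact dif_neg (fun hh => hh.2 h)

lemma card_le [Fintype V] [DecidableRel G.Adj] (hT : G.IsTree) {S : Set (Sym2 V)}
    (hS : IsEdgeGPSet G S) : S.ncard ≤ (pendantEdges G).ncard := by
  classical
  have hpend : ∀ e ∈ S, pick hT hS e ∈ pendantEdges G := by
    intro e he
    by_cases h : e ∈ pendantEdges G
    · rw [pick_id hT hS h]; exact h
    · obtain ⟨u, v, _, hp, _⟩ := pick_spec hT hS ⟨he, h⟩
      exact hp
  have hinj : Set.InjOn (pick hT hS) S := by
    intro e1 h1 e2 h2 heq
    by_contra hne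
    by_cases c1 : e1 ∈ pendantEdges G
    · rw [pick_id hT hS c1] at heq
      by_cases c2 : e2 ∈ pendantEdges G
      · rw [pick_id hT hS c2] at heq
        exact hne heq
      · obtain ⟨u', v', hu'v', hp2, hs2, hee2, hside2, hall2⟩ := pick_spec hT hS ⟨h2, c2⟩
        exact hs2 (heq ▸ h1)
    · obtain ⟨u, v, huv, hp1, hs1, hee1, hside1, hall1⟩ := pick_spec hT hS ⟨h1, c1⟩
      by_cases c2 : e2 ∈ pendantEdges G
      · rw [pick_id hT hS c2] at heq
        exact hs1 (heq ▸ h2)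
      · obtain ⟨u', v', hu'v', hp2, hs2, hee2, hside2, hall2⟩ := pick_spec hT hS ⟨h2, c2⟩
        obtain ⟨heS, z, hzf, hdz⟩ := hp1
        have hzf2 : z ∈ pick hT hS e2 := by rw [← heq]; exact hzf
        have hx1 : side hT v u z := hside1 z hzf
        have hx2 : side hT v' u' z := hside2 z hzf2
        have hne' : s(u, v) ≠ s(u', v') := by rw [← hee1, ← hee2]; exact hne
        have hh1 : side hT u v u' :=
          hall1 e2 h2 (fun hh => hne hh.symm) u' (by rw [hee2]; exact Sym2.mem_mk_left _ _)
        have hh2 : side hT u' v' u :=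
          hall2 e1 h1 (fun hh => hne hh) u (by rw [hee1]; exact Sym2.mem_mk_left _ _)
        exact inj_clash hT huv hu'v' hne' hx1 hx2 hh1 hh2
  exact Set.ncard_le_ncard_of_injOn (pick hT hS) hpend hinj (Set.toFinite _)

end EgpTreeAux

theorem egp_tree {V : Type*} [Fintype V] (G : SimpleGraph V) [DecidableRel G.Adj]
    (hT : G.IsTree) :
    IsGreatest {n : ℕ | ∃ S : Set (Sym2 V), IsEdgeGPSet G S ∧ S.ncard = n}
      (pendantEdges G).ncard := by
  constructor
  · exact ⟨pendantEdges G, EgpTreeAux.pendant_gp hT, rfl⟩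
  · rintro n ⟨S, hS, rfl⟩
    exact EgpTreeAux.card_le hT hS
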